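/- Every monomial M_{i₁j₁}^{n₁} ⋯ M_{i_k j_k}^{n_k} in the classical angular momenta (pairwise distinct pairs (i_s, j_s) with 1 ≤ i_s < j_s ≤ N, exponents n_s ≥ 1) can be represented as a ℂ-linear combination of monomials in the classical angular momenta which have no crossings. -/
import Mathlib


/-!
STATEMENT 13: every monomial in the classical angular momenta can be represented as a
ℂ-linear combination of monomials with no crossings.
-/

noncomputable section

open Finset MvPolynomial

/-- The polynomial ring `ℂ[x_1, …, x_N, p_1, …, p_N]`. -/
abbrev PR (N : ℕ) := MvPolynomial (Fin N ⊕ Fin N) ℂ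

/-- The classical angular momentum `M_{ij} = x_i p_j − x_j p_i`. -/
def Mang {N : ℕ} (i j : Fin N) : PR N :=
  X (Sum.inl i) * X (Sum.inr j) - X (Sum.inl j) * X (Sum.inr i)

/-- The monomial `∏_{i<j} M_{ij}^{n_{ij}}` in the classical angular momenta. -/
def monM {N : ℕ} (n : Fin N → Fin N → ℕ) : PR N :=
  ∏ i, ∏ j, if i < j then Mang i j ^ n i j else 1

/-- The arcs of the monomial with exponents `n`: an arc `(i, j)` (as natural numbers)
for each pair `i < j` with `n i j ≠ 0`. -/
def ArcM {N : ℕ} (n : Fin N → Fin N → ℕ) (p : ℕ × ℕ) : Prop :=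
  ∃ i j : Fin N, i < j ∧ n i j ≠ 0 ∧ p = ((i : ℕ), (j : ℕ))

/-- The monomial with exponents `n` has no crossings: no two of its arcs `(a,b)`, `(c,d)`
satisfy `a < c < b < d`. -/
def NoCrossM {N : ℕ} (n : Fin N → Fin N → ℕ) : Prop :=
  ∀ p q : ℕ × ℕ, ArcM n p → ArcM n q → ¬(p.1 < q.1 ∧ q.1 < p.2 ∧ p.2 < q.2)

/- ### auxiliary machinery -/

def chi (i j k l : ℕ) : ℕ := if i < k ∧ k < j ∧ j < l then 1 else 0

def sng {N : ℕ} (a b : Fin N) : Fin N → Fin N → ℕ :=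
  fun i j => if i = a ∧ j = b then 1 else 0

def Bfun {N : ℕ} (m m' : Fin N → Fin N → ℕ) : ℕ :=
  ∑ i, ∑ j, ∑ k, ∑ l, m i j * m' k l * chi i j k l

lemma sum_sng_mul {N : ℕ} (a b : Fin N) (f : Fin N → Fin N → ℕ) :
    (∑ i, ∑ j, sng a b i j * f i j) = f a b := by
  simp [sng, ite_and, Finset.sum_ite_eq', mul_ite]

lemma B_add_left {N : ℕ} (m k m' : Fin N → Fin N → ℕ) :
    Bfun (m + k) m' = Bfun m m' + Bfun k m' := by
  simp [Bfun, Pi.add_apply, add_mul, Finset.sum_add_distrib]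

lemma B_add_right {N : ℕ} (m m' k' : Fin N → Fin N → ℕ) :
    Bfun m (m' + k') = Bfun m m' + Bfun m k' := by
  simp [Bfun, Pi.add_apply, mul_add, add_mul, Finset.sum_add_distrib]

lemma B_sng_right {N : ℕ} (m : Fin N → Fin N → ℕ) (a b : Fin N) :
    Bfun m (sng a b) = ∑ i, ∑ j, m i j * chi i j a b := by
  unfold Bfun
  refine Finset.sum_congr rfl fun i _ => Finset.sum_congr rfl fun j _ => ?_
  calc (∑ k, ∑ l, m i j * sng a b k l * chi ↑i ↑j ↑k ↑l)
      = ∑ k, ∑ l, sng a b k l * (m i j * chi ↑i ↑j ↑k ↑l) := by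
        refine Finset.sum_congr rfl fun k _ => Finset.sum_congr rfl fun l _ => by ring
    _ = m i j * chi ↑i ↑j ↑a ↑b := sum_sng_mul a b _

lemma B_sng_left {N : ℕ} (m : Fin N → Fin N → ℕ) (a b : Fin N) :
    Bfun (sng a b) m = ∑ k, ∑ l, m k l * chi a b k l := by
  unfold Bfun
  calc (∑ i, ∑ j, ∑ k, ∑ l, sng a b i j * m k l * chi ↑i ↑j ↑k ↑l)
      = ∑ i, ∑ j, sng a b i j * ∑ k, ∑ l, m k l * chi ↑i ↑j ↑k ↑l := by
        refine Finset.sum_congr rfl fun i _ => Finset.sum_congr rfl fun j _ => ?_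
        rw [Finset.mul_sum]
        refine Finset.sum_congr rfl fun k _ => ?_
        rw [Finset.mul_sum]
        refine Finset.sum_congr rfl fun l _ => by ring
    _ = ∑ k, ∑ l, m k l * chi ↑a ↑b ↑k ↑l := sum_sng_mul a b _

lemma B_sng_sng {N : ℕ} (a b c d : Fin N) :
    Bfun (sng a b) (sng c d) = chi a b c d := by
  rw [B_sng_left]
  exact sum_sng_mul c d _

lemma B_expand {N : ℕ} (m s1 s2 : Fin N → Fin N → ℕ) :
    Bfun (m + s1 + s2) (m + s1 + s2) =
      Bfun m m +
      (Bfun m s1 + Bfun m s2 + Bfun s1 m + Bfun s2 m) +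
      (Bfun s1 s1 + Bfun s1 s2 + Bfun s2 s1 + Bfun s2 s2) := by
  simp only [B_add_left, B_add_right]; ring

lemma key1 (a b c d e f : ℕ) (hab : a < b) (hbc : b < c) (hcd : c < d) :
    chi e f a b + chi e f c d + chi a b e f + chi c d e f ≤
    chi e f a c + chi e f b d + chi a c e f + chi b d e f := by
  simp only [chi]; split_ifs <;> omega

lemma key2 (a b c d e f : ℕ) (hab : a < b) (hbc : b < c) (hcd : c < d) :
    chi e f a d + chi e f b c + chi a d e f + chi b c e f ≤
    chi e f a c + chi e f b d + chi a c e f + chi b d e f := by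
  simp only [chi]; split_ifs <;> omega

lemma plucker {N : ℕ} (a b c d : Fin N) :
    Mang a c * Mang b d = Mang a b * Mang c d + Mang a d * Mang b c := by
  unfold Mang; ring

lemma monM_add {N : ℕ} (m k : Fin N → Fin N → ℕ) :
    monM (m + k) = monM m * monM k := by
  unfold monM
  rw [← Finset.prod_mul_distrib]
  refine Finset.prod_congr rfl fun i _ => ?_
  rw [← Finset.prod_mul_distrib]
  refine Finset.prod_congr rfl fun j _ => ?_
  by_cases h : i < j
  · simp [h, Pi.add_apply, pow_add]
  · simp [h]

lemma monM_sng {N : ℕ} {a b : Fin N} (hab : a < b) :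
    monM (sng a b) = Mang a b := by
  unfold monM sng
  calc (∏ i, ∏ j, if i < j then Mang i j ^ (if i = a ∧ j = b then 1 else 0) else 1)
      = ∏ i, ∏ j, (if i = a ∧ j = b then Mang a b else 1) := by
        refine Finset.prod_congr rfl fun i _ => Finset.prod_congr rfl fun j _ => ?_
        by_cases h : i = a ∧ j = b
        · obtain ⟨rfl, rfl⟩ := h; simp [hab]
        · simp [h]
    _ = Mang a b := by simp [ite_and, Finset.prod_ite_eq']

/-- Resolving one crossing strictly decreases the crossing number. -/
lemma exists_decomp {N : ℕ} (n : Fin N → Fin N → ℕ) (h : ¬ NoCrossM n) :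
    ∃ n₁ n₂ : Fin N → Fin N → ℕ,
      monM n = monM n₁ + monM n₂ ∧ Bfun n₁ n₁ < Bfun n n ∧ Bfun n₂ n₂ < Bfun n n := by
  simp only [NoCrossM] at h
  push_neg at h
  obtain ⟨p, q, hp, hq, h1, h2, h3⟩ := h
  obtain ⟨a, c, hacf, hnac, rfl⟩ := hp
  obtain ⟨b, d, hbdf, hnbd, rfl⟩ := hq
  simp only at h1 h2 h3
  -- h1 : ↑a < ↑b, h2 : ↑b < ↑c, h3 : ↑c < ↑d
  have hab : a < b := Fin.lt_def.mpr h1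
  have hbc : b < c := Fin.lt_def.mpr h2
  have hcd : c < d := Fin.lt_def.mpr h3
  set n' : Fin N → Fin N → ℕ := fun i j => n i j - sng a c i j - sng b d i j with hn'
  have hfun : n = n' + sng a c + sng b d := by
    funext i j
    simp only [hn', sng, Pi.add_apply]
    split_ifs with hA hB hB
    · exact absurd (hA.1.symm.trans hB.1) (ne_of_lt hab)
    · obtain ⟨rfl, rfl⟩ := hA; omega
    · obtain ⟨rfl, rfl⟩ := hB; omega
    · omega
  refine ⟨n' + sng a b + sng c d, n' + sng a d + sng b c, ?_, ?_, ?_⟩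
  · calc monM n = monM (n' + sng a c + sng b d) := congrArg monM hfun
      _ = monM n' * (Mang a c * Mang b d) := by
          rw [monM_add, monM_add, monM_sng hacf, monM_sng hbdf, mul_assoc]
      _ = monM n' * (Mang a b * Mang c d) + monM n' * (Mang a d * Mang b c) := by
          rw [plucker, mul_add]
      _ = monM (n' + sng a b + sng c d) + monM (n' + sng a d + sng b c) := by
          rw [monM_add, monM_add, monM_sng hab, monM_sng hcd, mul_assoc,
            monM_add, monM_add, monM_sng (hab.trans (hbc.trans hcd)), monM_sng hbc, mul_assoc]
  all_goals {
    have hBn : Bfun n n = Bfun n' n' +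
        ((∑ i, ∑ j, n' i j * chi ↑i ↑j ↑a ↑c) + (∑ i, ∑ j, n' i j * chi ↑i ↑j ↑b ↑d) +
         (∑ i, ∑ j, n' i j * chi ↑a ↑c ↑i ↑j) + (∑ i, ∑ j, n' i j * chi ↑b ↑d ↑i ↑j)) + 1 := by
      rw [congrArg (fun m => Bfun m m) hfun, B_expand, B_sng_right, B_sng_right,
        B_sng_left, B_sng_left, B_sng_sng, B_sng_sng, B_sng_sng, B_sng_sng]
      have e1 : chi ↑a ↑c ↑a ↑c = 0 := by simp only [chi]; split_ifs <;> omega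
      have e2 : chi ↑a ↑c ↑b ↑d = 1 := by simp only [chi]; split_ifs <;> omega
      have e3 : chi ↑b ↑d ↑a ↑c = 0 := by simp only [chi]; split_ifs <;> omega
      have e4 : chi ↑b ↑d ↑b ↑d = 0 := by simp only [chi]; split_ifs <;> omega
      rw [e1, e2, e3, e4]
    rw [hBn]
    first
    | · -- the (a,b),(c,d) resolution
        rw [B_expand, B_sng_right, B_sng_right, B_sng_left, B_sng_left,
          B_sng_sng, B_sng_sng, B_sng_sng, B_sng_sng]
        have e1 : chi ↑a ↑b ↑a ↑b = 0 := by simp only [chi]; split_ifs <;> omega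
        have e2 : chi ↑a ↑b ↑c ↑d = 0 := by simp only [chi]; split_ifs <;> omega
        have e3 : chi ↑c ↑d ↑a ↑b = 0 := by simp only [chi]; split_ifs <;> omega
        have e4 : chi ↑c ↑d ↑c ↑d = 0 := by simp only [chi]; split_ifs <;> omega
        rw [e1, e2, e3, e4]
        have hle : (∑ i, ∑ j, n' i j * chi ↑i ↑j ↑a ↑b) + (∑ i, ∑ j, n' i j * chi ↑i ↑j ↑c ↑d) +
            (∑ i, ∑ j, n' i j * chi ↑a ↑b ↑i ↑j) + (∑ i, ∑ j, n' i j * chi ↑c ↑d ↑i ↑j) ≤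
            (∑ i, ∑ j, n' i j * chi ↑i ↑j ↑a ↑c) + (∑ i, ∑ j, n' i j * chi ↑i ↑j ↑b ↑d) +
            (∑ i, ∑ j, n' i j * chi ↑a ↑c ↑i ↑j) + (∑ i, ∑ j, n' i j * chi ↑b ↑d ↑i ↑j) := by
          calc _ = ∑ i, ∑ j, n' i j *
                (chi ↑i ↑j ↑a ↑b + chi ↑i ↑j ↑c ↑d + chi ↑a ↑b ↑i ↑j + chi ↑c ↑d ↑i ↑j) := by
                simp only [mul_add, Finset.sum_add_distrib]
            _ ≤ ∑ i, ∑ j, n' i j *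
                (chi ↑i ↑j ↑a ↑c + chi ↑i ↑j ↑b ↑d + chi ↑a ↑c ↑i ↑j + chi ↑b ↑d ↑i ↑j) :=
                Finset.sum_le_sum fun i _ => Finset.sum_le_sum fun j _ =>
                  Nat.mul_le_mul_left _ (key1 _ _ _ _ _ _ h1 h2 h3)
            _ = _ := by simp only [mul_add, Finset.sum_add_distrib]
        omega
    | · -- the (a,d),(b,c) resolution
        rw [B_expand, B_sng_right, B_sng_right, B_sng_left, B_sng_left,
          B_sng_sng, B_sng_sng, B_sng_sng, B_sng_sng]
        have e1 : chi ↑a ↑d ↑a ↑d = 0 := by simp only [chi]; split_ifs <;> omega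
        have e2 : chi ↑a ↑d ↑b ↑c = 0 := by simp only [chi]; split_ifs <;> omega
        have e3 : chi ↑b ↑c ↑a ↑d = 0 := by simp only [chi]; split_ifs <;> omega
        have e4 : chi ↑b ↑c ↑b ↑c = 0 := by simp only [chi]; split_ifs <;> omega
        rw [e1, e2, e3, e4]
        have hle : (∑ i, ∑ j, n' i j * chi ↑i ↑j ↑a ↑d) + (∑ i, ∑ j, n' i j * chi ↑i ↑j ↑b ↑c) +
            (∑ i, ∑ j, n' i j * chi ↑a ↑d ↑i ↑j) + (∑ i, ∑ j, n' i j * chi ↑b ↑c ↑i ↑j) ≤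
            (∑ i, ∑ j, n' i j * chi ↑i ↑j ↑a ↑c) + (∑ i, ∑ j, n' i j * chi ↑i ↑j ↑b ↑d) +
            (∑ i, ∑ j, n' i j * chi ↑a ↑c ↑i ↑j) + (∑ i, ∑ j, n' i j * chi ↑b ↑d ↑i ↑j) := by
          calc _ = ∑ i, ∑ j, n' i j *
                (chi ↑i ↑j ↑a ↑d + chi ↑i ↑j ↑b ↑c + chi ↑a ↑d ↑i ↑j + chi ↑b ↑c ↑i ↑j) := by
                simp only [mul_add, Finset.sum_add_distrib]
            _ ≤ ∑ i, ∑ j, n' i j *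
                (chi ↑i ↑j ↑a ↑c + chi ↑i ↑j ↑b ↑d + chi ↑a ↑c ↑i ↑j + chi ↑b ↑d ↑i ↑j) :=
                Finset.sum_le_sum fun i _ => Finset.sum_le_sum fun j _ =>
                  Nat.mul_le_mul_left _ (key2 _ _ _ _ _ _ h1 h2 h3)
            _ = _ := by simp only [mul_add, Finset.sum_add_distrib]
        omega
  }

theorem statement13 (N : ℕ) (n : Fin N → Fin N → ℕ) :
    monM n ∈ Submodule.span ℂ
      { q : PR N | ∃ m : Fin N → Fin N → ℕ, NoCrossM m ∧ q = monM m } := by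
  suffices H : ∀ (c : ℕ) (n : Fin N → Fin N → ℕ), Bfun n n ≤ c →
      monM n ∈ Submodule.span ℂ
        { q : PR N | ∃ m : Fin N → Fin N → ℕ, NoCrossM m ∧ q = monM m } by
    exact H (Bfun n n) n le_rfl
  intro c
  induction c with
  | zero =>
    intro n hn
    by_cases h : NoCrossM n
    · exact Submodule.subset_span ⟨n, h, rfl⟩
    · obtain ⟨n₁, n₂, _, hlt, _⟩ := exists_decomp n h
      omega
  | succ c ih =>
    intro n hn
    by_cases h : NoCrossM n
    · exact Submodule.subset_span ⟨n, h, rfl⟩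
    · obtain ⟨n₁, n₂, heq, h1, h2⟩ := exists_decomp n h
      rw [heq]
      exact Submodule.add_mem _ (ih n₁ (by omega)) (ih n₂ (by omega))
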